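/- Let α : S ↷ A be an inverse semigroup action on a Banach algebra A. Then the convolution product on ℓ¹(α), defined by (f*g)(r) := Σ_{st=r} α_s(α_{s*}(f(s)) g(t)), is associative: (f*g)*h = f*(g*h) for all f, g, h ∈ ℓ¹(α). (The proof uses that each ideal I_t has an approximate unit.) -/

import Mathlib

set_option autoImplicit false

open Filter Topology

/-- An inverse semigroup: every element `t` has a generalized inverse `sInv t`,
which is the unique `w` with `t * w * t = t` and `w * t * w = w`. -/
def IsInvSemigroup (S : Type*) [Semigroup S] (sInv : S → S) : Prop :=
  (∀ t : S, t * sInv t * t = t) ∧ (∀ t : S, sInv t * t * sInv t = sInv t) ∧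
    ∀ t w : S, t * w * t = t → w * t * w = w → w = sInv t

/-- An action of an inverse semigroup `S` (with generalized inverse `sInv`) on a
Banach algebra `A` by partial automorphisms `act t : I (sInv t) → I t` between
closed two-sided ideals, satisfying (PA1) and (PA2). -/
structure InvSemigroupAction (S : Type*) [Semigroup S] (sInv : S → S)
    (A : Type*) [NonUnitalNormedRing A] [NormedSpace ℂ A] where
  /-- the ideals `I t` -/
  I : S → Submodule ℂ A
  /-- the partial automorphisms; only the values on `I (sInv t)` are relevant -/
  act : S → A → A
  ideal_closed : ∀ t, IsClosed (I t : Set A)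
  ideal_mul_left : ∀ t (a : A), ∀ x ∈ I t, a * x ∈ I t
  ideal_mul_right : ∀ t (a : A), ∀ x ∈ I t, x * a ∈ I t
  act_mem : ∀ t, ∀ a ∈ I (sInv t), act t a ∈ I t
  act_surjOn : ∀ t, ∀ b ∈ I t, ∃ a ∈ I (sInv t), act t a = b
  act_add : ∀ t, ∀ a ∈ I (sInv t), ∀ b ∈ I (sInv t), act t (a + b) = act t a + act t b
  act_smul : ∀ t (c : ℂ), ∀ a ∈ I (sInv t), act t (c • a) = c • act t a
  act_mul : ∀ t, ∀ a ∈ I (sInv t), ∀ b ∈ I (sInv t), act t (a * b) = act t a * act t b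
  act_norm : ∀ t, ∀ a ∈ I (sInv t), ‖act t a‖ = ‖a‖
  /-- (PA1): `act s ∘ act t = act (s*t)` as partial maps: domains match ... -/
  comp_dom : ∀ s t (a : A), (a ∈ I (sInv t) ∧ act t a ∈ I (sInv s)) ↔ a ∈ I (sInv (s * t))
  /-- (PA1): ... and values agree on the common domain. -/
  comp_act : ∀ s t, ∀ a ∈ I (sInv (s * t)), act s (act t a) = act (s * t) a
  /-- (PA2): each ideal has a contractive two-sided approximate unit (as a filter/net). -/
  approx_unit : ∀ t, ∃ l : Filter A, l.NeBot ∧ (∀ᶠ x in l, x ∈ I t ∧ ‖x‖ ≤ 1) ∧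
    ∀ a ∈ I t, Tendsto (fun x => x * a) l (𝓝 a) ∧ Tendsto (fun x => a * x) l (𝓝 a)
  /-- (PA2): the union of the ideals over idempotents has dense linear span. -/
  dense_span : Dense (↑(Submodule.span ℂ (⋃ e ∈ {e : S | e * e = e}, (I e : Set A))) : Set A)

/-- The convolution product on `ℓ¹(α)`:
`(f * g)(r) = ∑_{s t = r} α_s(α_{s*}(f s) · g t)`. -/
noncomputable def convVal {S : Type*} [Semigroup S] {sInv : S → S}
    {A : Type*} [NonUnitalNormedRing A] [NormedSpace ℂ A]
    (θ : InvSemigroupAction S sInv A) (f g : S → A) (r : S) : A :=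
  ∑' p : {p : S × S // p.1 * p.2 = r},
    θ.act p.1.1 (θ.act (sInv p.1.1) (f p.1.1) * g p.1.2)

section Aux

variable {S A : Type*} [Semigroup S] [NonUnitalNormedRing A] [NormedSpace ℂ A]
variable {sInv : S → S}

lemma aux_sInv_sInv (hS : IsInvSemigroup S sInv) (t : S) : sInv (sInv t) = t :=
  (hS.2.2 (sInv t) t (hS.2.1 t) (hS.1 t)).symm

lemma aux_sInv_idem (hS : IsInvSemigroup S sInv) {e : S} (he : e * e = e) : sInv e = e :=
  (hS.2.2 e e (by rw [he, he]) (by rw [he, he])).symm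

lemma aux_idem_ts (hS : IsInvSemigroup S sInv) (t : S) :
    (sInv t * t) * (sInv t * t) = sInv t * t := by
  have h := hS.2.1 t
  calc (sInv t * t) * (sInv t * t) = (sInv t * t * sInv t) * t := by
        rw [mul_assoc (sInv t * t) (sInv t) t]
    _ = sInv t * t := by rw [h]

lemma aux_act_zero (θ : InvSemigroupAction S sInv A) (t : S) : θ.act t 0 = 0 := by
  have := θ.act_smul t 0 0 (Submodule.zero_mem _)
  simpa using this

lemma aux_act_sub (θ : InvSemigroupAction S sInv A) (t : S) {x y : A}
    (hx : x ∈ θ.I (sInv t)) (hy : y ∈ θ.I (sInv t)) :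
    θ.act t (x - y) = θ.act t x - θ.act t y := by
  have hneg : θ.act t (-y) = -θ.act t y := by
    have := θ.act_smul t (-1) y hy
    simpa using this
  have h := θ.act_add t x hx (-y) (Submodule.neg_mem _ hy)
  rw [sub_eq_add_neg, h, hneg, ← sub_eq_add_neg]

lemma aux_mem_dom_iff (hS : IsInvSemigroup S sInv) (θ : InvSemigroupAction S sInv A)
    (t : S) (a : A) : a ∈ θ.I (sInv t) ↔ a ∈ θ.I (sInv (sInv t * t)) := by
  constructor
  · intro ha
    exact (θ.comp_dom (sInv t) t a).1 ⟨ha, by rw [aux_sInv_sInv hS]; exact θ.act_mem t a ha⟩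
  · intro ha
    exact ((θ.comp_dom (sInv t) t a).2 ha).1

lemma aux_act_id (hS : IsInvSemigroup S sInv) (θ : InvSemigroupAction S sInv A)
    {e : S} (he : e * e = e) {a : A} (ha : a ∈ θ.I e) : θ.act e a = a := by
  have hse : sInv e = e := aux_sInv_idem hS he
  have ha' : a ∈ θ.I (sInv e) := by rw [hse]; exact ha
  have hmem : a ∈ θ.I (sInv (e * e)) := by rw [he, hse]; exact ha
  have h1 : θ.act e (θ.act e a) = θ.act e a := by
    have := θ.comp_act e e a hmem
    rwa [he] at this
  have hmem2 : θ.act e a ∈ θ.I (sInv e) := by rw [hse]; exact θ.act_mem e a ha'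
  have h2 : θ.act e (θ.act e a - a) = 0 := by
    rw [aux_act_sub θ e hmem2 ha', h1, sub_self]
  have h3 : ‖θ.act e a - a‖ = 0 := by
    rw [← θ.act_norm e _ (Submodule.sub_mem _ hmem2 ha'), h2, norm_zero]
  exact sub_eq_zero.mp (norm_eq_zero.mp h3)

lemma aux_act_inv (hS : IsInvSemigroup S sInv) (θ : InvSemigroupAction S sInv A)
    (t : S) {y : A} (hy : y ∈ θ.I (sInv t)) : θ.act (sInv t) (θ.act t y) = y := by
  have hmem : y ∈ θ.I (sInv (sInv t * t)) := (aux_mem_dom_iff hS θ t y).1 hy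
  have h1 := θ.comp_act (sInv t) t y hmem
  rw [h1]
  exact aux_act_id hS θ (aux_idem_ts hS t)
    (by rw [← aux_sInv_idem hS (aux_idem_ts hS t)]; exact hmem)

lemma aux_act_inv' (hS : IsInvSemigroup S sInv) (θ : InvSemigroupAction S sInv A)
    (t : S) {b : A} (hb : b ∈ θ.I t) : θ.act t (θ.act (sInv t) b) = b := by
  have := aux_act_inv hS θ (sInv t) (y := b) (by rw [aux_sInv_sInv hS]; exact hb)
  rwa [aux_sInv_sInv hS] at this

/-- The elementary "twisted product" appearing in the convolution. -/
noncomputable def Tm (θ : InvSemigroupAction S sInv A) (s : S) (a b : A) : A :=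
  θ.act s (θ.act (sInv s) a * b)

lemma convVal_eq_Tm (θ : InvSemigroupAction S sInv A) (f g : S → A) (r : S) :
    convVal θ f g r = ∑' p : {p : S × S // p.1 * p.2 = r}, Tm θ p.1.1 (f p.1.1) (g p.1.2) :=
  rfl

lemma Tm_mem (hS : IsInvSemigroup S sInv) (θ : InvSemigroupAction S sInv A)
    {s t : S} {a b : A} (ha : a ∈ θ.I s) (hb : b ∈ θ.I t) :
    Tm θ s a b ∈ θ.I (s * t) := by
  have ha' : a ∈ θ.I (sInv (sInv s)) := by rw [aux_sInv_sInv hS]; exact ha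
  have hd : θ.act (sInv s) a ∈ θ.I (sInv s) := θ.act_mem (sInv s) a ha'
  have hx1 : θ.act (sInv s) a * b ∈ θ.I (sInv s) := θ.ideal_mul_right (sInv s) b _ hd
  have hx2 : θ.act (sInv s) a * b ∈ θ.I t := θ.ideal_mul_left t _ _ hb
  have hx2' : θ.act (sInv s) a * b ∈ θ.I (sInv (sInv t)) := by rw [aux_sInv_sInv hS]; exact hx2
  have hy1 : θ.act (sInv t) (θ.act (sInv s) a * b) ∈ θ.I (sInv t) := θ.act_mem (sInv t) _ hx2'
  have hty : θ.act t (θ.act (sInv t) (θ.act (sInv s) a * b)) = θ.act (sInv s) a * b :=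
    aux_act_inv' hS θ t hx2
  have hy2 : θ.act (sInv t) (θ.act (sInv s) a * b) ∈ θ.I (sInv (s * t)) :=
    (θ.comp_dom s t _).1 ⟨hy1, by rw [hty]; exact hx1⟩
  have hkey : θ.act s (θ.act (sInv s) a * b) = θ.act (s * t) (θ.act (sInv t) (θ.act (sInv s) a * b)) := by
    conv_lhs => rw [← hty]
    exact θ.comp_act s t _ hy2
  show θ.act s (θ.act (sInv s) a * b) ∈ θ.I (s * t)
  rw [hkey]
  exact θ.act_mem (s * t) _ hy2

lemma Tm_norm (hS : IsInvSemigroup S sInv) (θ : InvSemigroupAction S sInv A)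
    {s : S} {a : A} (ha : a ∈ θ.I s) (b : A) : ‖Tm θ s a b‖ ≤ ‖a‖ * ‖b‖ := by
  have ha' : a ∈ θ.I (sInv (sInv s)) := by rw [aux_sInv_sInv hS]; exact ha
  have hd : θ.act (sInv s) a ∈ θ.I (sInv s) := θ.act_mem (sInv s) a ha'
  have h1 : ‖Tm θ s a b‖ = ‖θ.act (sInv s) a * b‖ :=
    θ.act_norm s _ (θ.ideal_mul_right (sInv s) b _ hd)
  rw [h1]
  calc ‖θ.act (sInv s) a * b‖ ≤ ‖θ.act (sInv s) a‖ * ‖b‖ := norm_mul_le _ _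
    _ = ‖a‖ * ‖b‖ := by rw [θ.act_norm (sInv s) a ha']

lemma aux_tendsto_act (hS : IsInvSemigroup S sInv) (θ : InvSemigroupAction S sInv A)
    (t : S) {ι : Type*} {l : Filter ι} {φ : ι → A} {x : A}
    (hx : x ∈ θ.I (sInv t)) (hmem : ∀ᶠ i in l, φ i ∈ θ.I (sInv t))
    (hφ : Tendsto φ l (𝓝 x)) :
    Tendsto (fun i => θ.act t (φ i)) l (𝓝 (θ.act t x)) := by
  rw [tendsto_iff_norm_sub_tendsto_zero] at hφ ⊢
  refine hφ.congr' ?_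
  filter_upwards [hmem] with i hi
  rw [← aux_act_sub θ t hi hx, θ.act_norm t _ (Submodule.sub_mem _ hi hx)]

lemma aux_hasSum_comp {ι : Type*} {M : Set A} (hMc : IsClosed M) (h0 : (0 : A) ∈ M)
    (hMadd : ∀ a ∈ M, ∀ b ∈ M, a + b ∈ M)
    {φ : A → A} (hφ0 : φ 0 = 0) (hφadd : ∀ a ∈ M, ∀ b ∈ M, φ (a + b) = φ a + φ b)
    {C : ℝ} (hφlip : ∀ a ∈ M, ∀ b ∈ M, ‖φ a - φ b‖ ≤ C * ‖a - b‖)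
    {x : ι → A} (hx : ∀ i, x i ∈ M) {S0 : A} (hsum : HasSum x S0) :
    HasSum (fun i => φ (x i)) (φ S0) := by
  classical
  have hmemF : ∀ F : Finset ι, (∑ i ∈ F, x i) ∈ M := by
    intro F
    induction F using Finset.cons_induction with
    | empty => simpa using h0
    | cons a s ha ih => rw [Finset.sum_cons]; exact hMadd _ (hx a) _ ih
  have hS0 : S0 ∈ M := hMc.mem_of_tendsto hsum (Eventually.of_forall hmemF)
  have hmap : ∀ F : Finset ι, φ (∑ i ∈ F, x i) = ∑ i ∈ F, φ (x i) := by
    intro F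
    induction F using Finset.cons_induction with
    | empty => simpa using hφ0
    | cons a s ha ih => rw [Finset.sum_cons, Finset.sum_cons, hφadd _ (hx a) _ (hmemF s), ih]
  have h1 : Tendsto (fun F : Finset ι => φ (∑ i ∈ F, x i)) atTop (𝓝 (φ S0)) := by
    rw [tendsto_iff_norm_sub_tendsto_zero]
    have h2 : Tendsto (fun F : Finset ι => C * ‖(∑ i ∈ F, x i) - S0‖) atTop (𝓝 (C * 0)) :=
      (tendsto_iff_norm_sub_tendsto_zero.1 hsum).const_mul C
    rw [mul_zero] at h2
    exact squeeze_zero (fun F => norm_nonneg _) (fun F => hφlip _ (hmemF F) _ hS0) h2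
  exact h1.congr hmap

lemma aux_Tm_zero_left (hS : IsInvSemigroup S sInv) (θ : InvSemigroupAction S sInv A)
    (s : S) (c : A) : Tm θ s 0 c = 0 := by
  unfold Tm
  rw [aux_act_zero, zero_mul, aux_act_zero]

lemma aux_Tm_add_left (hS : IsInvSemigroup S sInv) (θ : InvSemigroupAction S sInv A)
    (s : S) (c : A) {a b : A} (ha : a ∈ θ.I s) (hb : b ∈ θ.I s) :
    Tm θ s (a + b) c = Tm θ s a c + Tm θ s b c := by
  have ha' : a ∈ θ.I (sInv (sInv s)) := by rw [aux_sInv_sInv hS]; exact ha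
  have hb' : b ∈ θ.I (sInv (sInv s)) := by rw [aux_sInv_sInv hS]; exact hb
  have m1 : θ.act (sInv s) a * c ∈ θ.I (sInv s) :=
    θ.ideal_mul_right (sInv s) c _ (θ.act_mem (sInv s) a ha')
  have m2 : θ.act (sInv s) b * c ∈ θ.I (sInv s) :=
    θ.ideal_mul_right (sInv s) c _ (θ.act_mem (sInv s) b hb')
  unfold Tm
  rw [θ.act_add (sInv s) a ha' b hb', add_mul, θ.act_add s _ m1 _ m2]

lemma aux_Tm_sub_left (hS : IsInvSemigroup S sInv) (θ : InvSemigroupAction S sInv A)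
    (s : S) (c : A) {a b : A} (ha : a ∈ θ.I s) (hb : b ∈ θ.I s) :
    Tm θ s (a - b) c = Tm θ s a c - Tm θ s b c := by
  have ha' : a ∈ θ.I (sInv (sInv s)) := by rw [aux_sInv_sInv hS]; exact ha
  have hb' : b ∈ θ.I (sInv (sInv s)) := by rw [aux_sInv_sInv hS]; exact hb
  have m1 : θ.act (sInv s) a * c ∈ θ.I (sInv s) :=
    θ.ideal_mul_right (sInv s) c _ (θ.act_mem (sInv s) a ha')
  have m2 : θ.act (sInv s) b * c ∈ θ.I (sInv s) :=
    θ.ideal_mul_right (sInv s) c _ (θ.act_mem (sInv s) b hb')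
  unfold Tm
  rw [aux_act_sub θ (sInv s) ha' hb', sub_mul, aux_act_sub θ s m1 m2]

lemma aux_hasSum_Tm_left (hS : IsInvSemigroup S sInv) (θ : InvSemigroupAction S sInv A)
    (s : S) (c : A) {ι : Type*} {x : ι → A} (hx : ∀ i, x i ∈ θ.I s) {S0 : A}
    (hsum : HasSum x S0) :
    HasSum (fun i => Tm θ s (x i) c) (Tm θ s S0 c) := by
  refine aux_hasSum_comp (M := (θ.I s : Set A)) (θ.ideal_closed s) (Submodule.zero_mem _)
    (fun a ha b hb => Submodule.add_mem _ ha hb) (φ := fun a => Tm θ s a c)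
    (aux_Tm_zero_left hS θ s c) (fun a ha b hb => aux_Tm_add_left hS θ s c ha hb)
    (C := ‖c‖) ?_ hx hsum
  intro a ha b hb
  rw [← aux_Tm_sub_left hS θ s c ha hb]
  calc ‖Tm θ s (a - b) c‖ ≤ ‖a - b‖ * ‖c‖ := Tm_norm hS θ (Submodule.sub_mem _ ha hb) c
    _ = ‖c‖ * ‖a - b‖ := mul_comm _ _

lemma aux_hasSum_Tm_right (hS : IsInvSemigroup S sInv) (θ : InvSemigroupAction S sInv A)
    (s : S) {a : A} (ha : a ∈ θ.I s) {ι : Type*} {x : ι → A} {S0 : A}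
    (hsum : HasSum x S0) :
    HasSum (fun i => Tm θ s a (x i)) (Tm θ s a S0) := by
  have ha' : a ∈ θ.I (sInv (sInv s)) := by rw [aux_sInv_sInv hS]; exact ha
  have hd : θ.act (sInv s) a ∈ θ.I (sInv s) := θ.act_mem (sInv s) a ha'
  refine aux_hasSum_comp (M := (Set.univ : Set A)) isClosed_univ (Set.mem_univ _)
    (fun _ _ _ _ => Set.mem_univ _) (φ := fun cc => Tm θ s a cc)
    ?_ ?_ (C := ‖a‖) ?_ (fun _ => Set.mem_univ _) hsum
  · show Tm θ s a 0 = 0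
    unfold Tm; rw [mul_zero, aux_act_zero]
  · intro c1 _ c2 _
    have m1 : θ.act (sInv s) a * c1 ∈ θ.I (sInv s) := θ.ideal_mul_right (sInv s) c1 _ hd
    have m2 : θ.act (sInv s) a * c2 ∈ θ.I (sInv s) := θ.ideal_mul_right (sInv s) c2 _ hd
    show Tm θ s a (c1 + c2) = Tm θ s a c1 + Tm θ s a c2
    unfold Tm
    rw [mul_add, θ.act_add s _ m1 _ m2]
  · intro c1 _ c2 _
    have m1 : θ.act (sInv s) a * c1 ∈ θ.I (sInv s) := θ.ideal_mul_right (sInv s) c1 _ hd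
    have m2 : θ.act (sInv s) a * c2 ∈ θ.I (sInv s) := θ.ideal_mul_right (sInv s) c2 _ hd
    show ‖Tm θ s a c1 - Tm θ s a c2‖ ≤ ‖a‖ * ‖c1 - c2‖
    unfold Tm
    rw [← aux_act_sub θ s m1 m2, ← mul_sub]
    rw [θ.act_norm s _ (θ.ideal_mul_right (sInv s) _ _ hd)]
    calc ‖θ.act (sInv s) a * (c1 - c2)‖ ≤ ‖θ.act (sInv s) a‖ * ‖c1 - c2‖ := norm_mul_le _ _
      _ = ‖a‖ * ‖c1 - c2‖ := by rw [θ.act_norm (sInv s) a ha']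

lemma aux_key (hS : IsInvSemigroup S sInv) (θ : InvSemigroupAction S sInv A)
    (t : S) (d : A) {b : A} (hb : b ∈ θ.I t) (c : A) :
    Tm θ t (d * b) c = d * Tm θ t b c := by
  obtain ⟨l, hne, hev, happ⟩ := θ.approx_unit t
  have hIdd : ∀ z : A, z ∈ θ.I t → z ∈ θ.I (sInv (sInv t)) := by
    intro z hz; rw [aux_sInv_sInv hS]; exact hz
  have hdb : d * b ∈ θ.I t := θ.ideal_mul_left t d b hb
  have hbc : θ.act (sInv t) b * c ∈ θ.I (sInv t) :=
    θ.ideal_mul_right (sInv t) c _ (θ.act_mem (sInv t) b (hIdd b hb))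
  have hGmem : Tm θ t b c ∈ θ.I t := θ.act_mem t _ hbc
  have h1 : Tendsto (fun u => u * (d * b)) l (𝓝 (d * b)) := (happ _ hdb).1
  have h2 : Tendsto (fun u => θ.act (sInv t) (u * (d * b))) l (𝓝 (θ.act (sInv t) (d * b))) :=
    aux_tendsto_act hS θ (sInv t) (hIdd _ hdb)
      (Eventually.of_forall fun u => hIdd _ (θ.ideal_mul_left t u _ hdb)) h1
  have h3 : Tendsto (fun u => θ.act (sInv t) (u * (d * b)) * c) l
      (𝓝 (θ.act (sInv t) (d * b) * c)) := h2.mul tendsto_const_nhds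
  have h4 : Tendsto (fun u => θ.act t (θ.act (sInv t) (u * (d * b)) * c)) l
      (𝓝 (θ.act t (θ.act (sInv t) (d * b) * c))) := by
    refine aux_tendsto_act hS θ t ?_ ?_ h3
    · exact θ.ideal_mul_right (sInv t) c _ (θ.act_mem (sInv t) _ (hIdd _ hdb))
    · exact Eventually.of_forall fun u =>
        θ.ideal_mul_right (sInv t) c _
          (θ.act_mem (sInv t) _ (hIdd _ (θ.ideal_mul_left t u _ hdb)))
  have h5 : (fun u => θ.act t (θ.act (sInv t) (u * (d * b)) * c)) =ᶠ[l]
      fun u => u * (d * Tm θ t b c) := by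
    filter_upwards [hev] with u hu
    have hud : u * d ∈ θ.I t := θ.ideal_mul_right t d u hu.1
    have hud' : u * d ∈ θ.I (sInv (sInv t)) := hIdd _ hud
    have e1 : u * (d * b) = (u * d) * b := (mul_assoc u d b).symm
    have e2 : θ.act (sInv t) ((u * d) * b) = θ.act (sInv t) (u * d) * θ.act (sInv t) b :=
      θ.act_mul (sInv t) _ hud' _ (hIdd b hb)
    have m1 : θ.act (sInv t) (u * d) ∈ θ.I (sInv t) := θ.act_mem (sInv t) _ hud'
    have e3 : θ.act t (θ.act (sInv t) (u * d) * (θ.act (sInv t) b * c)) =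
        θ.act t (θ.act (sInv t) (u * d)) * θ.act t (θ.act (sInv t) b * c) :=
      θ.act_mul t _ m1 _ hbc
    have e4 : θ.act t (θ.act (sInv t) (u * d)) = u * d := aux_act_inv' hS θ t hud
    calc θ.act t (θ.act (sInv t) (u * (d * b)) * c)
        = θ.act t (θ.act (sInv t) (u * d) * θ.act (sInv t) b * c) := by rw [e1, e2]
      _ = θ.act t (θ.act (sInv t) (u * d) * (θ.act (sInv t) b * c)) := by rw [mul_assoc]
      _ = (u * d) * Tm θ t b c := by rw [e3, e4]; rfl
      _ = u * (d * Tm θ t b c) := mul_assoc _ _ _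
  have h6 : Tendsto (fun u => u * (d * Tm θ t b c)) l (𝓝 (d * Tm θ t b c)) :=
    (happ _ (θ.ideal_mul_left t d _ hGmem)).1
  exact tendsto_nhds_unique (Tendsto.congr' h5 h4) h6

lemma aux_L (hS : IsInvSemigroup S sInv) (θ : InvSemigroupAction S sInv A)
    {s t : S} {a b : A} (ha : a ∈ θ.I s) (hb : b ∈ θ.I t) (c : A) :
    Tm θ (s * t) (Tm θ s a b) c = Tm θ s a (Tm θ t b c) := by
  have ha' : a ∈ θ.I (sInv (sInv s)) := by rw [aux_sInv_sInv hS]; exact ha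
  have hd : θ.act (sInv s) a ∈ θ.I (sInv s) := θ.act_mem (sInv s) a ha'
  have hx1 : θ.act (sInv s) a * b ∈ θ.I (sInv s) := θ.ideal_mul_right (sInv s) b _ hd
  have hx2 : θ.act (sInv s) a * b ∈ θ.I t := θ.ideal_mul_left t _ _ hb
  have hx2' : θ.act (sInv s) a * b ∈ θ.I (sInv (sInv t)) := by rw [aux_sInv_sInv hS]; exact hx2
  have hy1 : θ.act (sInv t) (θ.act (sInv s) a * b) ∈ θ.I (sInv t) := θ.act_mem (sInv t) _ hx2'
  have hty : θ.act t (θ.act (sInv t) (θ.act (sInv s) a * b)) = θ.act (sInv s) a * b :=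
    aux_act_inv' hS θ t hx2
  have hy2 : θ.act (sInv t) (θ.act (sInv s) a * b) ∈ θ.I (sInv (s * t)) :=
    (θ.comp_dom s t _).1 ⟨hy1, by rw [hty]; exact hx1⟩
  have hX : Tm θ s a b = θ.act (s * t) (θ.act (sInv t) (θ.act (sInv s) a * b)) := by
    show θ.act s (θ.act (sInv s) a * b) = _
    conv_lhs => rw [← hty]
    exact θ.comp_act s t _ hy2
  have hyc : θ.act (sInv t) (θ.act (sInv s) a * b) * c ∈ θ.I (sInv (s * t)) :=
    θ.ideal_mul_right (sInv (s * t)) c _ hy2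
  have hstep : θ.act (sInv (s * t)) (Tm θ s a b) = θ.act (sInv t) (θ.act (sInv s) a * b) := by
    rw [hX]
    exact aux_act_inv hS θ (s * t) hy2
  calc Tm θ (s * t) (Tm θ s a b) c
      = θ.act (s * t) (θ.act (sInv t) (θ.act (sInv s) a * b) * c) := by
        show θ.act (s * t) (θ.act (sInv (s * t)) (Tm θ s a b) * c) = _
        rw [hstep]
    _ = θ.act s (θ.act t (θ.act (sInv t) (θ.act (sInv s) a * b) * c)) :=
        (θ.comp_act s t _ hyc).symm
    _ = θ.act s (Tm θ t (θ.act (sInv s) a * b) c) := rfl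
    _ = θ.act s (θ.act (sInv s) a * Tm θ t b c) := by rw [aux_key hS θ t _ hb c]
    _ = Tm θ s a (Tm θ t b c) := rfl

/-- Reindexing for the left-associated double sum. -/
def eqL {S : Type*} [Semigroup S] (r : S) :
    {w : (S × S) × S // w.1.1 * w.1.2 * w.2 = r} ≃
      Σ q : {p : S × S // p.1 * p.2 = r}, {p : S × S // p.1 * p.2 = q.1.1} where
  toFun w := ⟨⟨(w.1.1.1 * w.1.1.2, w.1.2), w.2⟩, ⟨w.1.1, rfl⟩⟩
  invFun σ := ⟨(σ.2.1, σ.1.1.2), by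
    have hp := σ.2.2
    have hq := σ.1.2
    dsimp only
    rw [hp]
    exact hq⟩
  left_inv w := rfl
  right_inv σ := by
    obtain ⟨⟨⟨q1, q2⟩, hq⟩, ⟨⟨p1, p2⟩, hp⟩⟩ := σ
    dsimp only at hp
    subst hp
    rfl

/-- Reindexing for the right-associated double sum. -/
def eqR {S : Type*} [Semigroup S] (r : S) :
    {w : (S × S) × S // w.1.1 * w.1.2 * w.2 = r} ≃
      Σ q : {p : S × S // p.1 * p.2 = r}, {p : S × S // p.1 * p.2 = q.1.2} where
  toFun w := ⟨⟨(w.1.1.1, w.1.1.2 * w.1.2), by rw [← mul_assoc]; exact w.2⟩,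
    ⟨(w.1.1.2, w.1.2), rfl⟩⟩
  invFun σ := ⟨((σ.1.1.1, σ.2.1.1), σ.2.1.2), by
    have hp := σ.2.2
    have hq := σ.1.2
    dsimp only
    rw [mul_assoc, hp]
    exact hq⟩
  left_inv w := rfl
  right_inv σ := by
    obtain ⟨⟨⟨q1, q2⟩, hq⟩, ⟨⟨p1, p2⟩, hp⟩⟩ := σ
    dsimp only at hp
    subst hp
    rfl

end Aux


set_option maxHeartbeats 2000000 in
/-- the convolution product on `ℓ¹(α)` is associative. -/
theorem conv_assoc
    {S A : Type*} [Semigroup S] [NonUnitalNormedRing A] [NormedSpace ℂ A]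
    [CompleteSpace A]
    (sInv : S → S) (hS : IsInvSemigroup S sInv)
    (θ : InvSemigroupAction S sInv A)
    (f g h : S → A)
    (hf : ∀ t, f t ∈ θ.I t) (hg : ∀ t, g t ∈ θ.I t) (hh : ∀ t, h t ∈ θ.I t)
    (hf1 : Summable fun t => ‖f t‖) (hg1 : Summable fun t => ‖g t‖)
    (hh1 : Summable fun t => ‖h t‖) :
    ∀ r : S, convVal θ (convVal θ f g) h r = convVal θ f (convVal θ g h) r := by
  intro r
  classical
  have hfg : Summable (fun p : S × S => ‖f p.1‖ * ‖g p.2‖) :=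
    hf1.mul_of_nonneg hg1 (fun _ => norm_nonneg _) (fun _ => norm_nonneg _)
  have hgh : Summable (fun p : S × S => ‖g p.1‖ * ‖h p.2‖) :=
    hg1.mul_of_nonneg hh1 (fun _ => norm_nonneg _) (fun _ => norm_nonneg _)
  have hfgh : Summable (fun w : (S × S) × S => ‖f w.1.1‖ * ‖g w.1.2‖ * ‖h w.2‖) :=
    hfg.mul_of_nonneg hh1 (fun _ => mul_nonneg (norm_nonneg _) (norm_nonneg _))
      (fun _ => norm_nonneg _)
  have hinfg : ∀ q1 : S, HasSum
      (fun p : {p : S × S // p.1 * p.2 = q1} => Tm θ p.1.1 (f p.1.1) (g p.1.2))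
      (convVal θ f g q1) := by
    intro q1
    have hsm : Summable
        (fun p : {p : S × S // p.1 * p.2 = q1} => Tm θ p.1.1 (f p.1.1) (g p.1.2)) := by
      refine Summable.of_norm_bounded (hfg.subtype {p : S × S | p.1 * p.2 = q1}) ?_
      intro p
      exact Tm_norm hS θ (hf p.1.1) (g p.1.2)
    rw [convVal_eq_Tm]
    exact hsm.hasSum
  have hingh : ∀ q2 : S, HasSum
      (fun p : {p : S × S // p.1 * p.2 = q2} => Tm θ p.1.1 (g p.1.1) (h p.1.2))
      (convVal θ g h q2) := by
    intro q2
    have hsm : Summable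
        (fun p : {p : S × S // p.1 * p.2 = q2} => Tm θ p.1.1 (g p.1.1) (h p.1.2)) := by
      refine Summable.of_norm_bounded (hgh.subtype {p : S × S | p.1 * p.2 = q2}) ?_
      intro p
      exact Tm_norm hS θ (hg p.1.1) (h p.1.2)
    rw [convVal_eq_Tm]
    exact hsm.hasSum
  have hmemfg : ∀ q1 : S, ∀ p : {p : S × S // p.1 * p.2 = q1},
      Tm θ p.1.1 (f p.1.1) (g p.1.2) ∈ θ.I q1 := by
    intro q1 p
    have := Tm_mem hS θ (hf p.1.1) (hg p.1.2)
    rwa [p.2] at this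
  have hL1 : ∀ q : {p : S × S // p.1 * p.2 = r},
      Tm θ q.1.1 (convVal θ f g q.1.1) (h q.1.2)
        = ∑' p : {p : S × S // p.1 * p.2 = q.1.1},
            Tm θ q.1.1 (Tm θ p.1.1 (f p.1.1) (g p.1.2)) (h q.1.2) := fun q =>
    (aux_hasSum_Tm_left hS θ q.1.1 (h q.1.2) (hmemfg q.1.1) (hinfg q.1.1)).tsum_eq.symm
  have hR1 : ∀ q : {p : S × S // p.1 * p.2 = r},
      Tm θ q.1.1 (f q.1.1) (convVal θ g h q.1.2)
        = ∑' p : {p : S × S // p.1 * p.2 = q.1.2},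
            Tm θ q.1.1 (f q.1.1) (Tm θ p.1.1 (g p.1.1) (h p.1.2)) := fun q =>
    (aux_hasSum_Tm_right hS θ q.1.1 (hf q.1.1) (hingh q.1.2)).tsum_eq.symm
  set FL : (Σ q : {p : S × S // p.1 * p.2 = r}, {p : S × S // p.1 * p.2 = q.1.1}) → A :=
    fun σ => Tm θ σ.1.1.1 (Tm θ σ.2.1.1 (f σ.2.1.1) (g σ.2.1.2)) (h σ.1.1.2) with hFLdef
  set FR : (Σ q : {p : S × S // p.1 * p.2 = r}, {p : S × S // p.1 * p.2 = q.1.2}) → A :=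
    fun σ => Tm θ σ.1.1.1 (f σ.1.1.1) (Tm θ σ.2.1.1 (g σ.2.1.1) (h σ.2.1.2)) with hFRdef
  have hsumL : Summable FL := by
    rw [← (eqL r).summable_iff]
    refine Summable.of_norm_bounded
      (hfgh.subtype {w : (S × S) × S | w.1.1 * w.1.2 * w.2 = r}) ?_
    intro w
    show ‖Tm θ (w.1.1.1 * w.1.1.2) (Tm θ w.1.1.1 (f w.1.1.1) (g w.1.1.2)) (h w.1.2)‖
      ≤ ‖f w.1.1.1‖ * ‖g w.1.1.2‖ * ‖h w.1.2‖
    calc ‖Tm θ (w.1.1.1 * w.1.1.2) (Tm θ w.1.1.1 (f w.1.1.1) (g w.1.1.2)) (h w.1.2)‖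
        ≤ ‖Tm θ w.1.1.1 (f w.1.1.1) (g w.1.1.2)‖ * ‖h w.1.2‖ :=
          Tm_norm hS θ (Tm_mem hS θ (hf _) (hg _)) _
      _ ≤ ‖f w.1.1.1‖ * ‖g w.1.1.2‖ * ‖h w.1.2‖ :=
          mul_le_mul_of_nonneg_right (Tm_norm hS θ (hf _) _) (norm_nonneg _)
  have hsumR : Summable FR := by
    rw [← (eqR r).summable_iff]
    refine Summable.of_norm_bounded
      (hfgh.subtype {w : (S × S) × S | w.1.1 * w.1.2 * w.2 = r}) ?_
    intro w
    show ‖Tm θ w.1.1.1 (f w.1.1.1) (Tm θ w.1.1.2 (g w.1.1.2) (h w.1.2))‖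
      ≤ ‖f w.1.1.1‖ * ‖g w.1.1.2‖ * ‖h w.1.2‖
    rw [mul_assoc]
    calc ‖Tm θ w.1.1.1 (f w.1.1.1) (Tm θ w.1.1.2 (g w.1.1.2) (h w.1.2))‖
        ≤ ‖f w.1.1.1‖ * ‖Tm θ w.1.1.2 (g w.1.1.2) (h w.1.2)‖ := Tm_norm hS θ (hf _) _
      _ ≤ ‖f w.1.1.1‖ * (‖g w.1.1.2‖ * ‖h w.1.2‖) :=
          mul_le_mul_of_nonneg_left (Tm_norm hS θ (hg _) _) (norm_nonneg _)
  calc convVal θ (convVal θ f g) h r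
      = ∑' q : {p : S × S // p.1 * p.2 = r},
          Tm θ q.1.1 (convVal θ f g q.1.1) (h q.1.2) := convVal_eq_Tm θ _ h r
    _ = ∑' q : {p : S × S // p.1 * p.2 = r}, ∑' p : {p : S × S // p.1 * p.2 = q.1.1},
          Tm θ q.1.1 (Tm θ p.1.1 (f p.1.1) (g p.1.2)) (h q.1.2) := tsum_congr hL1
    _ = ∑' σ : (Σ q : {p : S × S // p.1 * p.2 = r}, {p : S × S // p.1 * p.2 = q.1.1}),
          FL σ := (Summable.tsum_sigma hsumL).symm
    _ = ∑' w : {w : (S × S) × S // w.1.1 * w.1.2 * w.2 = r}, FL (eqL r w) :=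
        ((eqL r).tsum_eq FL).symm
    _ = ∑' w : {w : (S × S) × S // w.1.1 * w.1.2 * w.2 = r}, FR (eqR r w) := by
        refine tsum_congr fun w => ?_
        show Tm θ (w.1.1.1 * w.1.1.2) (Tm θ w.1.1.1 (f w.1.1.1) (g w.1.1.2)) (h w.1.2)
          = Tm θ w.1.1.1 (f w.1.1.1) (Tm θ w.1.1.2 (g w.1.1.2) (h w.1.2))
        exact aux_L hS θ (hf _) (hg _) _
    _ = ∑' σ : (Σ q : {p : S × S // p.1 * p.2 = r}, {p : S × S // p.1 * p.2 = q.1.2}),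
          FR σ := (eqR r).tsum_eq FR
    _ = ∑' q : {p : S × S // p.1 * p.2 = r}, ∑' p : {p : S × S // p.1 * p.2 = q.1.2},
          Tm θ q.1.1 (f q.1.1) (Tm θ p.1.1 (g p.1.1) (h p.1.2)) := Summable.tsum_sigma hsumR
    _ = ∑' q : {p : S × S // p.1 * p.2 = r},
          Tm θ q.1.1 (f q.1.1) (convVal θ g h q.1.2) := (tsum_congr hR1).symm
    _ = convVal θ f (convVal θ g h) r := (convVal_eq_Tm θ f _ r).symm
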